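/- For any positive reals λ₁,…,λ_d, any q ∈ {1,…,N} and any multi-index 𝐣 ∈ {−1,…,J−1}^d, letting 𝒥_in := {p : 0 ≤ j_p ≤ J−2} and 𝒥₁ := {p : j_p = J−1}, one has a_q^𝐣 = h · Σ_{p∈𝒥_in} λ_p j_p + ( (h + δ^μ)/2 − φ((1−q)δ) ) · Σ_{p∈𝒥_in} λ_p + Σ_{p∈𝒥₁} λ_p. -/
import Mathlib


noncomputable section

/-- The smeared-out Heaviside shape function `S(z) = z - sin(2πz)/(2π)`. -/
def Sfun (z : ℝ) : ℝ := z - Real.sin (2 * Real.pi * z) / (2 * Real.pi)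

/-- The quintic shape function `P(z) = z³(6z² - 15z + 10)`. -/
def Pfun (z : ℝ) : ℝ := z ^ 3 * (6 * z ^ 2 - 15 * z + 10)

/-- The inner function `ψ_q(x) = φ(x + (1-q)δ) - φ((1-q)δ)`. -/
def psi (φ : ℝ → ℝ) (δ : ℝ) (q : ℕ) (x : ℝ) : ℝ :=
  φ (x + (1 - (q : ℝ)) * δ) - φ ((1 - (q : ℝ)) * δ)

/-- The hypercube center coordinate `c_q^j`, with the boundary conventions
`c_q^{-1} = 0` and `c_q^{J-1} = 1`. -/
def center (h δ : ℝ) (J : ℕ) (q : ℕ) (j : ℤ) : ℝ :=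
  if j = -1 then 0
  else if j = (J : ℤ) - 1 then 1
  else (j : ℝ) * h + (h + δ) / 2 + ((q : ℝ) - 1) * δ

/-- The mapped hypercube center `a_q^jv = Ψ_q(𝐜_q^jv) = Σ_p λ_p ψ_q(c_q^{j_p})`. -/
def amap (φ : ℝ → ℝ) (h δ : ℝ) (J : ℕ) {d : ℕ} (lam : Fin d → ℝ)
    (q : ℕ) (jv : Fin d → ℤ) : ℝ :=
  ∑ p, lam p * psi φ δ q (center h δ J q (jv p))

/-- explicit formula for a_q^jv in terms of interior and rightmost indices. -/
theorem amap_explicit_formula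
    (N : ℕ) (hN : 2 ≤ N) (δ : ℝ) (hδ : 0 < δ) (μ : ℝ) (hμ : 0 < μ)
    (h : ℝ) (hh : h = (N : ℝ) * δ)
    (φ : ℝ → ℝ)
    (hφS : ∀ j : ℤ, ∀ t ∈ Set.Icc ((j : ℝ) * h) ((j : ℝ) * h + δ),
      φ t = (j : ℝ) * h + δ ^ μ * Sfun ((t - (j : ℝ) * h) / δ))
    (hφP : ∀ j : ℤ, ∀ t ∈ Set.Icc ((j : ℝ) * h + δ) (((j : ℝ) + 1) * h),
      φ t = (j : ℝ) * h + δ ^ μ + (h - δ ^ μ) * Pfun ((t - (j : ℝ) * h - δ) / (h - δ)))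
    (J : ℕ) (hJ : 0 < J) (hJh : (J : ℝ) * h = 1)
    (d : ℕ) (hd : 2 ≤ d) (lam : Fin d → ℝ) (hlam : ∀ p, 0 < lam p)
    :
    ∀ q : ℕ, 1 ≤ q → q ≤ N →
      ∀ jv : Fin d → ℤ, (∀ p, -1 ≤ jv p ∧ jv p ≤ (J : ℤ) - 1) →
        amap φ h δ J lam q jv =
          h * (∑ p ∈ Finset.univ.filter (fun p => 0 ≤ jv p ∧ jv p ≤ (J : ℤ) - 2),
                lam p * (jv p : ℝ)) +
          ((h + δ ^ μ) / 2 - φ ((1 - (q : ℝ)) * δ)) *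
            (∑ p ∈ Finset.univ.filter (fun p => 0 ≤ jv p ∧ jv p ≤ (J : ℤ) - 2), lam p) +
          ∑ p ∈ Finset.univ.filter (fun p => jv p = (J : ℤ) - 1), lam p := by
  intro q hq1 hqN jv hjv
  have hN2 : (2:ℝ) ≤ (N:ℝ) := by exact_mod_cast hN
  have hδh : δ ≤ h := by rw [hh]; nlinarith
  have hhδpos : 0 < h - δ := by rw [hh]; nlinarith
  have hq : (1:ℝ) ≤ q := by exact_mod_cast hq1
  have hqN' : (q:ℝ) ≤ N := by exact_mod_cast hqN
  set t : ℝ := (1 - (q:ℝ)) * δ with ht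
  have htlb : δ - h ≤ t := by rw [ht, hh]; nlinarith
  have htub : t ≤ 0 := by rw [ht]; nlinarith
  set C : ℝ := (h + δ ^ μ) / 2 - φ t with hC
  have hJ1 : (1:ℤ) ≤ (J:ℤ) := by exact_mod_cast hJ
  have half : Pfun (1/2 : ℝ) = 1/2 := by norm_num [Pfun]
  have key : ∀ p : Fin d, lam p * psi φ δ q (center h δ J q (jv p)) =
      (if 0 ≤ jv p ∧ jv p ≤ (J:ℤ) - 2 then lam p * ((jv p : ℝ) * h + C) else 0)
      + (if jv p = (J:ℤ) - 1 then lam p else 0) := by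
    intro p
    obtain ⟨hlo, hhi⟩ := hjv p
    rcases eq_or_lt_of_le hlo with hm1 | h0
    · -- jv p = -1
      have hne : jv p ≠ (J:ℤ) - 1 := by omega
      have hneg : ¬ (0 ≤ jv p ∧ jv p ≤ (J:ℤ) - 2) := by omega
      rw [if_neg hneg, if_neg hne]
      simp [psi, center, ← hm1, ← ht]
    rcases eq_or_lt_of_le hhi with hJm1 | hlt
    · -- jv p = J - 1
      have hne : jv p ≠ -1 := by omega
      have hneg : ¬ (0 ≤ jv p ∧ jv p ≤ (J:ℤ) - 2) := by omega
      rw [if_neg hneg, if_pos hJm1, zero_add]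
      have hc : center h δ J q (jv p) = 1 := by
        rw [center, if_neg hne, if_pos hJm1]
      rw [hc]
      have e1 : φ t = ((-1:ℤ) : ℝ) * h + δ ^ μ + (h - δ ^ μ) *
          Pfun ((t - ((-1:ℤ) : ℝ) * h - δ) / (h - δ)) := by
        apply hφP (-1) t
        constructor <;> push_cast <;> linarith
      have e2 : φ (1 + t) = (((J:ℤ) - 1 : ℤ) : ℝ) * h + δ ^ μ + (h - δ ^ μ) *
          Pfun ((1 + t - (((J:ℤ) - 1 : ℤ) : ℝ) * h - δ) / (h - δ)) := by
        apply hφP ((J:ℤ) - 1) (1 + t)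
        constructor <;> push_cast <;> nlinarith
      have harg : (1 + t - (((J:ℤ) - 1 : ℤ) : ℝ) * h - δ) / (h - δ)
          = (t - ((-1:ℤ) : ℝ) * h - δ) / (h - δ) := by
        push_cast
        congr 1
        linarith [hJh]
      have hpsi : psi φ δ q 1 = 1 := by
        rw [psi]
        show φ (1 + t) - φ t = 1
        rw [e2, e1, harg]
        push_cast
        linarith [hJh]
      rw [hpsi, mul_one]
    · -- interior
      have h0' : 0 ≤ jv p := by omega
      have h2 : jv p ≤ (J:ℤ) - 2 := by omega
      have hne : jv p ≠ -1 := by omega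
      have hne2 : jv p ≠ (J:ℤ) - 1 := by omega
      rw [if_pos ⟨h0', h2⟩, if_neg hne2, add_zero]
      have hc : center h δ J q (jv p) = (jv p : ℝ) * h + (h + δ) / 2 + ((q:ℝ) - 1) * δ := by
        rw [center, if_neg hne, if_neg hne2]
      have hx : center h δ J q (jv p) + t = (jv p : ℝ) * h + (h + δ) / 2 := by
        rw [hc, ht]; ring
      have e3 : φ ((jv p : ℝ) * h + (h + δ) / 2) = (jv p : ℝ) * h + δ ^ μ + (h - δ ^ μ) *
          Pfun (((jv p : ℝ) * h + (h + δ) / 2 - (jv p : ℝ) * h - δ) / (h - δ)) := by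
        apply hφP (jv p)
        constructor <;> linarith
      have harg2 : ((jv p : ℝ) * h + (h + δ) / 2 - (jv p : ℝ) * h - δ) / (h - δ) = 1/2 := by
        rw [div_eq_iff (by linarith : h - δ ≠ 0)]; ring
      rw [psi, ← ht, hx, e3, harg2, half, hC]
      ring
  rw [amap]
  simp_rw [key]
  rw [Finset.sum_add_distrib, ← Finset.sum_filter, ← Finset.sum_filter]
  congr 1
  rw [Finset.mul_sum, Finset.mul_sum, ← Finset.sum_add_distrib]
  apply Finset.sum_congr rfl
  intro p _
  rw [hC]
  ring
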